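/- Let γ ∈ (0, 1/2), K ≥ 0, M ≥ 0, T > 0, and let b : ℝ → ℝ be twice differentiable with |b′(x)| ≤ K(1+|x|)^{−γ} and |b″(x)| ≤ M for all x. Set c₁ = K/(1−γ), c₂ = K|b(0)| + M/2, c₃ = K²/(1−γ), and β′(x) = b(x)b′(x) + b″(x)/2. Then for every continuous function X : [0,T] → ℝ, writing Ψ = ∫₀^T X(s)² ds + X(T)², one has ∫₀^T |β′(X(s))| ds + |b(X(T))| ≤ |b(0)| + (c₂ + c₃)T + c₃·T^{1/2+γ}·Ψ^{(1−2γ)/2} + c₁·Ψ^{(1−γ)/2}. -/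

import Mathlib

open Real MeasureTheory intervalIntegral

private lemma gd_bound_nonneg (γ K : ℝ) (hγ0 : 0 < γ) (hγ1 : γ < 1) (hK : 0 ≤ K)
    (f : ℝ → ℝ) (hf : Differentiable ℝ f) (hfc : Continuous (deriv f))
    (hfd : ∀ x, |deriv f x| ≤ K * (1 + |x|) ^ (-γ)) (a : ℝ) (ha : 0 ≤ a) :
    |f a - f 0| ≤ K / (1 - γ) * a ^ (1 - γ) := by
  have hFTC : ∫ u in (0:ℝ)..a, deriv f u = f a - f 0 :=
    intervalIntegral.integral_deriv_eq_sub (fun x _ => hf x) (hfc.intervalIntegrable _ _)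
  have hintrpow : IntervalIntegrable (fun u : ℝ => K * u ^ (-γ)) volume 0 a :=
    (intervalIntegrable_rpow' (by linarith)).const_mul K
  have hmono : (∫ u in (0:ℝ)..a, |deriv f u|) ≤ ∫ u in (0:ℝ)..a, K * u ^ (-γ) := by
    apply intervalIntegral.integral_mono_ae_restrict ha (hfc.abs.intervalIntegrable _ _) hintrpow
    have h0 : ∀ᵐ u : ℝ ∂(volume.restrict (Set.Icc 0 a)), u ≠ 0 := by
      refine ae_restrict_of_ae ?_
      simp [ae_iff]
    have h1 : ∀ᵐ u : ℝ ∂(volume.restrict (Set.Icc 0 a)), u ∈ Set.Icc 0 a :=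
      ae_restrict_mem measurableSet_Icc
    filter_upwards [h0, h1] with u hu0 humem
    have hu : 0 < u := lt_of_le_of_ne humem.1 (Ne.symm hu0)
    calc |deriv f u| ≤ K * (1 + |u|) ^ (-γ) := hfd u
      _ = K * (1 + u) ^ (-γ) := by rw [abs_of_nonneg hu.le]
      _ ≤ K * u ^ (-γ) := by
          exact mul_le_mul_of_nonneg_left
            (Real.rpow_le_rpow_of_nonpos hu (by linarith) (by linarith)) hK
  have hcomp : (∫ u in (0:ℝ)..a, K * u ^ (-γ)) = K / (1 - γ) * a ^ (1 - γ) := by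
    rw [intervalIntegral.integral_const_mul, integral_rpow (Or.inl (by linarith))]
    rw [Real.zero_rpow (by linarith : -γ + 1 ≠ 0)]
    have : -γ + 1 = 1 - γ := by ring
    rw [this]
    field_simp
    rw [sub_zero]
  calc |f a - f 0| = |∫ u in (0:ℝ)..a, deriv f u| := by rw [hFTC]
    _ ≤ ∫ u in (0:ℝ)..a, |deriv f u| := intervalIntegral.abs_integral_le_integral_abs ha
    _ ≤ ∫ u in (0:ℝ)..a, K * u ^ (-γ) := hmono
    _ = K / (1 - γ) * a ^ (1 - γ) := hcomp
private lemma gd_bound_b (γ K : ℝ) (hγ0 : 0 < γ) (hγ1 : γ < 1) (hK : 0 ≤ K)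
    (b : ℝ → ℝ) (hb : Differentiable ℝ b) (hbc : Continuous (deriv b))
    (hbd : ∀ x, |deriv b x| ≤ K * (1 + |x|) ^ (-γ)) (x : ℝ) :
    |b x| ≤ |b 0| + K / (1 - γ) * |x| ^ (1 - γ) := by
  have key : |b x - b 0| ≤ K / (1 - γ) * |x| ^ (1 - γ) := by
    rcases le_or_gt 0 x with hx | hx
    · rw [abs_of_nonneg hx]
      exact gd_bound_nonneg γ K hγ0 hγ1 hK b hb hbc hbd x hx
    · set f : ℝ → ℝ := fun u => b (-u) with hfdef
      have hf : Differentiable ℝ f := hb.comp differentiable_neg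
      have hder : deriv f = fun u => -deriv b (-u) := by
        funext u; exact deriv_comp_neg b u
      have hfc : Continuous (deriv f) := by
        rw [hder]; exact (hbc.comp continuous_neg).neg
      have hfd : ∀ u, |deriv f u| ≤ K * (1 + |u|) ^ (-γ) := by
        intro u
        rw [hder]
        simpa [abs_neg] using hbd (-u)
      have := gd_bound_nonneg γ K hγ0 hγ1 hK f hf hfc hfd (-x) (by linarith)
      have hx' : |x| = -x := abs_of_neg hx
      simpa [hfdef, hx', abs_sub_comm] using this
  calc |b x| = |b 0 + (b x - b 0)| := by ring_nf
    _ ≤ |b 0| + |b x - b 0| := abs_add_le _ _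
    _ ≤ |b 0| + K / (1 - γ) * |x| ^ (1 - γ) := by linarith
-- Young / weighted AM-GM step
private lemma gd_young (γ lam x : ℝ) (hγ0 : 0 < γ) (hγ1 : γ < 1/2) (hlam : 0 < lam) :
    |x| ^ (1 - 2*γ) ≤
      (1 - (1 - 2*γ)/2) * lam ^ (1 - 2*γ) + (1 - 2*γ)/2 * lam ^ (-(1 + 2*γ)) * x ^ 2 := by
  set θ : ℝ := (1 - 2*γ)/2 with hθ
  have hθ0 : 0 ≤ θ := by rw [hθ]; linarith
  have hθ1 : 0 ≤ 1 - θ := by rw [hθ]; linarith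
  set a : ℝ := x ^ 2 / lam ^ 2 with ha
  have ha0 : 0 ≤ a := by positivity
  have hgm : (1:ℝ) ^ (1 - θ) * a ^ θ ≤ (1 - θ) * 1 + θ * a :=
    Real.geom_mean_le_arith_mean2_weighted hθ1 hθ0 zero_le_one ha0 (by ring)
  rw [Real.one_rpow, one_mul] at hgm
  have hkey := mul_le_mul_of_nonneg_left hgm (le_of_lt (Real.rpow_pos_of_pos hlam (1 - 2*γ)))
  -- LHS: lam^(1-2γ) * a^θ = |x|^(1-2γ)
  have hL : lam ^ (1 - 2*γ) * a ^ θ = |x| ^ (1 - 2*γ) := by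
    have h1 : a ^ θ = (x^2) ^ θ / (lam^2) ^ θ := Real.div_rpow (by positivity) (by positivity) θ
    have h2 : (lam ^ 2 : ℝ) ^ θ = lam ^ (1 - 2*γ) := by
      rw [← Real.rpow_natCast lam 2, ← Real.rpow_mul hlam.le]
      norm_num [hθ]
      ring_nf
    have h3 : (x ^ 2 : ℝ) ^ θ = |x| ^ (1 - 2*γ) := by
      rw [show (x:ℝ)^2 = |x|^2 by rw [sq_abs], ← Real.rpow_natCast |x| 2,
        ← Real.rpow_mul (abs_nonneg x)]
      norm_num [hθ]
      ring_nf
    rw [h1, h2, h3]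
    field_simp
  -- RHS: lam^(1-2γ) * ((1-θ) + θ*a) = (1-θ)*lam^(1-2γ) + θ*lam^(-(1+2γ))*x^2
  have hR : lam ^ (1 - 2*γ) * ((1 - θ) * 1 + θ * a) =
      (1 - θ) * lam ^ (1 - 2*γ) + θ * lam ^ (-(1 + 2*γ)) * x ^ 2 := by
    have h4 : lam ^ (1 - 2*γ) / lam ^ 2 = lam ^ (-(1 + 2*γ)) := by
      rw [show (lam:ℝ)^2 = lam ^ (2:ℝ) by rw [← Real.rpow_natCast lam 2]; norm_num,
        ← Real.rpow_sub hlam]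
      norm_num
      congr 1
      ring
    have hlam2 : (lam:ℝ)^2 ≠ 0 := by positivity
    calc lam ^ (1 - 2*γ) * ((1 - θ) * 1 + θ * a)
        = (1 - θ) * lam ^ (1 - 2*γ) + θ * (lam ^ (1 - 2*γ) / lam ^ 2) * x ^ 2 := by
          rw [ha]; field_simp
      _ = (1 - θ) * lam ^ (1 - 2*γ) + θ * lam ^ (-(1 + 2*γ)) * x ^ 2 := by rw [h4]
  rw [hL, hR] at hkey
  exact hkey


-- pointwise bound on β'
private lemma gd_beta_bound (γ K M : ℝ) (hγ0 : 0 < γ) (hγ1 : γ < 1/2) (hK : 0 ≤ K) (hM : 0 ≤ M)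
    (b : ℝ → ℝ) (hb : Differentiable ℝ b) (hbc : Continuous (deriv b))
    (hbd : ∀ x, |deriv b x| ≤ K * (1 + |x|) ^ (-γ))
    (bb : ℝ → ℝ) (hbb : ∀ x, |bb x| ≤ M) (x : ℝ) :
    |b x * deriv b x + bb x / 2| ≤
      (K * |b 0| + M / 2) + K ^ 2 / (1 - γ) * |x| ^ (1 - 2*γ) := by
  have h1 : |b x * deriv b x| ≤ (|b 0| + K / (1 - γ) * |x| ^ (1 - γ)) * (K * (1 + |x|) ^ (-γ)) := by
    rw [abs_mul]
    exact mul_le_mul (gd_bound_b γ K hγ0 (by linarith) hK b hb hbc hbd x) (hbd x)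
      (abs_nonneg _)
      (add_nonneg (abs_nonneg _) (mul_nonneg (div_nonneg hK (by linarith))
        (Real.rpow_nonneg (abs_nonneg _) _)))
  have h2 : (1 + |x|) ^ (-γ) ≤ 1 :=
    Real.rpow_le_one_of_one_le_of_nonpos (by simp [abs_nonneg]) (by linarith)
  have h3 : |x| ^ (1 - γ) * (1 + |x|) ^ (-γ) ≤ |x| ^ (1 - 2*γ) := by
    rcases eq_or_ne x 0 with hx | hx
    · simp [hx, Real.zero_rpow (by linarith : (1:ℝ) - γ ≠ 0),
        Real.zero_rpow (by linarith : (1:ℝ) - 2*γ ≠ 0)]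
    · have hxpos : 0 < |x| := abs_pos.2 hx
      have : (1 + |x|) ^ (-γ) ≤ |x| ^ (-γ) :=
        Real.rpow_le_rpow_of_nonpos hxpos (by linarith) (by linarith)
      calc |x| ^ (1 - γ) * (1 + |x|) ^ (-γ) ≤ |x| ^ (1 - γ) * |x| ^ (-γ) := by
            exact mul_le_mul_of_nonneg_left this (by positivity)
        _ = |x| ^ (1 - 2*γ) := by
            rw [← Real.rpow_add hxpos]; ring_nf
  have hexp : (|b 0| + K / (1 - γ) * |x| ^ (1 - γ)) * (K * (1 + |x|) ^ (-γ))
      ≤ K * |b 0| + K ^ 2 / (1 - γ) * |x| ^ (1 - 2*γ) := by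
    have e1 : (|b 0| + K / (1 - γ) * |x| ^ (1 - γ)) * (K * (1 + |x|) ^ (-γ))
        = K * (|b 0| * (1 + |x|) ^ (-γ)) + K ^ 2 / (1 - γ) * (|x| ^ (1 - γ) * (1 + |x|) ^ (-γ)) := by
      ring
    rw [e1]
    have t1 : |b 0| * (1 + |x|) ^ (-γ) ≤ |b 0| :=
      mul_le_of_le_one_right (abs_nonneg _) h2
    have t2 : K ^ 2 / (1 - γ) * (|x| ^ (1 - γ) * (1 + |x|) ^ (-γ))
        ≤ K ^ 2 / (1 - γ) * |x| ^ (1 - 2*γ) :=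
      mul_le_mul_of_nonneg_left h3 (div_nonneg (by positivity) (by linarith))
    have t3 : K * (|b 0| * (1 + |x|) ^ (-γ)) ≤ K * |b 0| :=
      mul_le_mul_of_nonneg_left t1 hK
    linarith
  calc |b x * deriv b x + bb x / 2| ≤ |b x * deriv b x| + |bb x / 2| := abs_add_le _ _
    _ ≤ (|b 0| + K / (1 - γ) * |x| ^ (1 - γ)) * (K * (1 + |x|) ^ (-γ)) + M / 2 := by
        have : |bb x / 2| ≤ M / 2 := by rw [abs_div]; simp; linarith [hbb x]
        linarith
    _ ≤ (K * |b 0| + M / 2) + K ^ 2 / (1 - γ) * |x| ^ (1 - 2*γ) := by linarith [hexp]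

/-- **Linear pathwise bound on the Girsanov drift terms.**
For `γ ∈ (0, 1/2)`, `b` twice differentiable with `|b′| ≤ K(1+|x|)^{−γ}`, `|b″| ≤ M`,
`c₁ = K/(1−γ)`, `c₂ = K|b(0)| + M/2`, `c₃ = K²/(1−γ)`, `β′ = b b′ + b″/2`, and any
continuous `X : [0,T] → ℝ`, with `Ψ = ∫₀^T X(s)² ds + X(T)²`:
`∫₀^T |β′(X s)| ds + |b(X T)| ≤ |b(0)| + (c₂+c₃)T + c₃ T^{1/2+γ} Ψ^{(1−2γ)/2} + c₁ Ψ^{(1−γ)/2}`. -/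
theorem girsanov_drift_abs_bound (γ K M T : ℝ)
    (hγ₀ : 0 < γ) (hγ₁ : γ < 1 / 2) (hK : 0 ≤ K) (hM : 0 ≤ M) (hT : 0 < T)
    (b : ℝ → ℝ) (hb : Differentiable ℝ b) (hb' : Differentiable ℝ (deriv b))
    (hbd : ∀ x : ℝ, |deriv b x| ≤ K * (1 + |x|) ^ (-γ))
    (hbd2 : ∀ x : ℝ, |deriv (deriv b) x| ≤ M)
    (c₁ c₂ c₃ : ℝ) (hc₁ : c₁ = K / (1 - γ)) (hc₂ : c₂ = K * |b 0| + M / 2)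
    (hc₃ : c₃ = K ^ 2 / (1 - γ))
    (β' : ℝ → ℝ) (hβ' : ∀ x : ℝ, β' x = b x * deriv b x + deriv (deriv b) x / 2)
    (X : ℝ → ℝ) (hX : ContinuousOn X (Set.Icc 0 T))
    (Ψ : ℝ) (hΨ : Ψ = (∫ s in (0:ℝ)..T, (X s) ^ 2) + (X T) ^ 2) :
    (∫ s in (0:ℝ)..T, |β' (X s)|) + |b (X T)| ≤
      |b 0| + (c₂ + c₃) * T + c₃ * T ^ (1 / 2 + γ) * Ψ ^ ((1 - 2 * γ) / 2) +
        c₁ * Ψ ^ ((1 - γ) / 2) := by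
  have hγ1 : γ < 1 := by linarith
  have hbc : Continuous (deriv b) := hb'.continuous
  have hc₁0 : 0 ≤ c₁ := by rw [hc₁]; exact div_nonneg hK (by linarith)
  have hc₃0 : 0 ≤ c₃ := by rw [hc₃]; exact div_nonneg (by positivity) (by linarith)
  set I : ℝ := ∫ s in (0:ℝ)..T, (X s) ^ 2 with hI
  have hI0 : 0 ≤ I := intervalIntegral.integral_nonneg hT.le (fun s _ => sq_nonneg _)
  have hΨ0 : 0 ≤ Ψ := by rw [hΨ]; positivity
  have hXT2 : (X T) ^ 2 ≤ Ψ := by rw [hΨ]; linarith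
  have hIΨ : I ≤ Ψ := by rw [hΨ]; nlinarith [sq_nonneg (X T)]
  -- pointwise bound
  have hpt : ∀ lam : ℝ, 0 < lam → ∀ y : ℝ, |β' y| ≤
      (c₂ + c₃ * (1 - (1 - 2*γ)/2) * lam ^ (1 - 2*γ)) +
        (c₃ * ((1 - 2*γ)/2) * lam ^ (-(1 + 2*γ))) * y ^ 2 := by
    intro lam hlam y
    have h1 : |β' y| ≤ (K * |b 0| + M / 2) + K ^ 2 / (1 - γ) * |y| ^ (1 - 2*γ) := by
      rw [hβ' y]
      exact gd_beta_bound γ K M hγ₀ hγ₁ hK hM b hb hbc hbd (deriv (deriv b)) hbd2 y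
    rw [← hc₂, ← hc₃] at h1
    have h2 := gd_young γ lam y hγ₀ hγ₁ hlam
    have h3 := mul_le_mul_of_nonneg_left h2 hc₃0
    nlinarith [h1, h3]
  -- measurability / integrability of the integrand
  have hX2cont : ContinuousOn (fun s => (X s) ^ 2) (Set.Icc 0 T) := hX.pow 2
  have huIcc : Set.uIcc (0:ℝ) T = Set.Icc 0 T := Set.uIcc_of_le hT.le
  have hX2int : IntervalIntegrable (fun s => (X s) ^ 2) volume 0 T := by
    apply ContinuousOn.intervalIntegrable; rw [huIcc]; exact hX2cont
  have hXae : AEMeasurable X (volume.restrict (Set.Ioc 0 T)) :=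
    (hX.mono Set.Ioc_subset_Icc_self).aemeasurable measurableSet_Ioc
  have hβ'meas : Measurable β' := by
    have hfe : β' = fun x => b x * deriv b x + deriv (deriv b) x / 2 := funext hβ'
    rw [hfe]
    exact (hb.continuous.measurable.mul hbc.measurable).add ((measurable_deriv _).div_const 2)
  have hfm : AEStronglyMeasurable (fun s => |β' (X s)|) (volume.restrict (Set.Ioc 0 T)) :=
    ((hβ'meas.abs).comp_aemeasurable hXae).aestronglyMeasurable
  -- main integral bound for any lam > 0
  have hmain : ∀ lam : ℝ, 0 < lam → (∫ s in (0:ℝ)..T, |β' (X s)|) ≤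
      (c₂ + c₃ * (1 - (1 - 2*γ)/2) * lam ^ (1 - 2*γ)) * T +
        (c₃ * ((1 - 2*γ)/2) * lam ^ (-(1 + 2*γ))) * I := by
    intro lam hlam
    set C1 : ℝ := c₂ + c₃ * (1 - (1 - 2*γ)/2) * lam ^ (1 - 2*γ) with hC1
    set C2 : ℝ := c₃ * ((1 - 2*γ)/2) * lam ^ (-(1 + 2*γ)) with hC2
    have hgint : IntervalIntegrable (fun s => C1 + C2 * (X s) ^ 2) volume 0 T := by
      apply ContinuousOn.intervalIntegrable
      rw [huIcc]
      exact continuousOn_const.add (continuousOn_const.mul hX2cont)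
    have hfint : IntervalIntegrable (fun s => |β' (X s)|) volume 0 T := by
      rw [intervalIntegrable_iff_integrableOn_Ioc_of_le hT.le]
      have hgint' : IntegrableOn (fun s => C1 + C2 * (X s) ^ 2) (Set.Ioc 0 T) volume :=
        (intervalIntegrable_iff_integrableOn_Ioc_of_le hT.le).mp hgint
      refine hgint'.mono' hfm ?_
      filter_upwards with s
      rw [Real.norm_eq_abs, abs_abs]
      exact hpt lam hlam (X s)
    have hmono := intervalIntegral.integral_mono_on hT.le hfint hgint
      (fun s _ => hpt lam hlam (X s))
    have hcalc : (∫ s in (0:ℝ)..T, (C1 + C2 * (X s) ^ 2)) = C1 * T + C2 * I := by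
      rw [intervalIntegral.integral_add intervalIntegrable_const (hX2int.const_mul C2),
        intervalIntegral.integral_const, intervalIntegral.integral_const_mul]
      simp [smul_eq_mul]
      ring
    rw [hcalc] at hmono
    exact hmono
  -- bound on the boundary term
  have hbT : |b (X T)| ≤ |b 0| + c₁ * Ψ ^ ((1 - γ)/2) := by
    have h1 := gd_bound_b γ K hγ₀ hγ1 hK b hb hbc hbd (X T)
    rw [← hc₁] at h1
    have h2 : |X T| ^ (1 - γ) = ((X T) ^ 2) ^ ((1 - γ)/2) := by
      rw [show (X T) ^ 2 = |X T| ^ 2 from (sq_abs _).symm, ← Real.rpow_natCast |X T| 2,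
        ← Real.rpow_mul (abs_nonneg _)]
      congr 1
      push_cast
      ring
    have h3 : ((X T) ^ 2) ^ ((1 - γ)/2) ≤ Ψ ^ ((1 - γ)/2) :=
      Real.rpow_le_rpow (sq_nonneg _) hXT2 (by linarith)
    have h4 : c₁ * |X T| ^ (1 - γ) ≤ c₁ * Ψ ^ ((1 - γ)/2) := by
      rw [h2]; exact mul_le_mul_of_nonneg_left h3 hc₁0
    linarith
  rcases eq_or_lt_of_le hΨ0 with hΨz | hΨpos
  · -- Ψ = 0
    have hIz : I = 0 := le_antisymm (by linarith [hIΨ, hΨz.symm ▸ hIΨ]) hI0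
    have h1 := hmain 1 one_pos
    rw [Real.one_rpow, Real.one_rpow, hIz] at h1
    have hz1 : Ψ ^ ((1 - 2*γ)/2) = 0 := by
      rw [← hΨz, Real.zero_rpow (by intro h; nlinarith : ((1:ℝ) - 2*γ)/2 ≠ 0)]
    have hz2 : Ψ ^ ((1 - γ)/2) = 0 := by
      rw [← hΨz, Real.zero_rpow (by intro h; nlinarith : ((1:ℝ) - γ)/2 ≠ 0)]
    rw [hz1] at *
    rw [hz2] at hbT ⊢
    nlinarith [h1, hbT, mul_nonneg hc₃0 hT.le]
  · -- Ψ > 0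
    set lam : ℝ := (Ψ / T) ^ ((1:ℝ)/2) with hlamdef
    have hP : 0 < Ψ / T := div_pos hΨpos hT
    have hlam : 0 < lam := Real.rpow_pos_of_pos hP _
    have hlam_r : ∀ r : ℝ, lam ^ r = Ψ ^ (r/2) / T ^ (r/2) := by
      intro r
      rw [hlamdef, ← Real.rpow_mul hP.le, Real.div_rpow hΨ0 hT.le,
        show ((1:ℝ)/2*r) = r/2 by ring]
    set E : ℝ := T ^ (1/2 + γ) * Ψ ^ ((1 - 2*γ)/2) with hE
    have hA : lam ^ (1 - 2*γ) * T = E := by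
      rw [hlam_r]
      rw [div_mul_eq_mul_div, div_eq_iff (ne_of_gt (Real.rpow_pos_of_pos hT _))]
      rw [hE, mul_comm (T ^ ((1:ℝ)/2 + γ)) _, mul_assoc, ← Real.rpow_add hT]
      rw [show ((1:ℝ)/2 + γ + (1 - 2*γ)/2) = 1 by ring, Real.rpow_one]
    have hB : lam ^ (-(1 + 2*γ)) * Ψ = E := by
      have hTpow : T ^ (-(1 + 2*γ)/2) = (T ^ ((1 + 2*γ)/2))⁻¹ := by
        rw [show (-(1 + 2*γ)/2 : ℝ) = -((1 + 2*γ)/2) by ring, Real.rpow_neg hT.le]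
      have hΨpow : Ψ ^ (-(1 + 2*γ)/2) * Ψ = Ψ ^ ((1 - 2*γ)/2) := by
        nth_rewrite 2 [← Real.rpow_one Ψ]
        rw [← Real.rpow_add hΨpos, show (-(1 + 2*γ)/2 + 1 : ℝ) = (1 - 2*γ)/2 by ring]
      have hTsplit : T ^ ((1 + 2*γ)/2) = T ^ ((1:ℝ)/2 + γ) := by
        congr 1; ring
      rw [hE, hlam_r]
      calc Ψ ^ (-(1 + 2*γ)/2) / T ^ (-(1 + 2*γ)/2) * Ψ
          = (Ψ ^ (-(1 + 2*γ)/2) * Ψ) * (T ^ (-(1 + 2*γ)/2))⁻¹ := by ring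
        _ = Ψ ^ ((1 - 2*γ)/2) * T ^ ((1 + 2*γ)/2) := by rw [hΨpow, hTpow, inv_inv]
        _ = T ^ (1/2 + γ) * Ψ ^ ((1 - 2*γ)/2) := by rw [hTsplit]; ring
    have h1 := hmain lam hlam
    have h2 : (c₃ * ((1 - 2*γ)/2) * lam ^ (-(1 + 2*γ))) * I ≤
        (c₃ * ((1 - 2*γ)/2) * lam ^ (-(1 + 2*γ))) * Ψ := by
      apply mul_le_mul_of_nonneg_left hIΨ
      have : (0:ℝ) ≤ (1 - 2*γ)/2 := by linarith
      positivity
    have h3 : (c₂ + c₃ * (1 - (1 - 2*γ)/2) * lam ^ (1 - 2*γ)) * T +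
        (c₃ * ((1 - 2*γ)/2) * lam ^ (-(1 + 2*γ))) * Ψ = c₂ * T + c₃ * E := by
      have e1 : c₃ * (1 - (1 - 2*γ)/2) * lam ^ (1 - 2*γ) * T
          = c₃ * (1 - (1 - 2*γ)/2) * E := by rw [mul_assoc, hA]
      have e2 : c₃ * ((1 - 2*γ)/2) * lam ^ (-(1 + 2*γ)) * Ψ
          = c₃ * ((1 - 2*γ)/2) * E := by rw [mul_assoc, hB]
      linear_combination e1 + e2
    have hfinal : (∫ s in (0:ℝ)..T, |β' (X s)|) ≤ c₂ * T + c₃ * E := by linarith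
    have hc₃T : 0 ≤ c₃ * T := mul_nonneg hc₃0 hT.le
    rw [hE] at hfinal
    linarith [hfinal, hbT, hc₃T]
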